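/- In the pair-distinguishability task with N inputs, classical communication satisfies (N−1)(S_C − 1) + 1 ≤ D_C, where S_C = (1/(N(N−1))) Σ_{x<x'} [ p(x|x,(x,x')) + p(x'|x',(x,x')) ] with p(z|x,y) = Σ_m p_e(m|x) p_d(z|y,m), and D_C = (1/N) Σ_m max_x p_e(m|x). -/

import Mathlib

open BigOperators

/-- Pair-distinguishability task with `N` inputs: classical communication satisfies
`(N−1)(S_C − 1) + 1 ≤ D_C`. -/
theorem stmt8 (N : ℕ) (hN : 2 ≤ N) [NeZero N] (M : Type*) [Fintype M]
    (pe : M → Fin N → ℝ) (hpe0 : ∀ m x, 0 ≤ pe m x)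
    (hpe1 : ∀ x, ∑ m, pe m x = 1)
    (pd : Fin N → (Fin N × Fin N) → M → ℝ) (hpd0 : ∀ z y m, 0 ≤ pd z y m)
    (hpd1 : ∀ y m, ∑ z, pd z y m = 1)
    (S D : ℝ)
    (hS : S = (1 / (N * (N - 1)) : ℝ) *
        ∑ q ∈ Finset.univ.filter (fun q : Fin N × Fin N => q.1 < q.2),
          ((∑ m, pe m q.1 * pd q.1 q m) + (∑ m, pe m q.2 * pd q.2 q m)))
    (hD : D = (1 / N : ℝ) * ∑ m, Finset.univ.sup' Finset.univ_nonempty fun x => pe m x) :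
    ((N : ℝ) - 1) * (S - 1) + 1 ≤ D := by
  classical
  subst hS hD
  have hN2 : (2:ℝ) ≤ (N:ℝ) := by exact_mod_cast hN
  have hNpos : (0:ℝ) < N := by linarith
  -- cardinality of the set of ordered pairs with q.1 < q.2
  have hcard2 : 2 * (Finset.univ.filter (fun q : Fin N × Fin N => q.1 < q.2)).card
      = N * N - N := by
    have himg : (Finset.univ.filter (fun q : Fin N × Fin N => q.1 < q.2)).image Prod.swap
        = Finset.univ.filter (fun q : Fin N × Fin N => q.2 < q.1) := by
      ext ⟨a, b⟩
      simp only [Finset.mem_image, Finset.mem_filter, Finset.mem_univ, true_and]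
      constructor
      · rintro ⟨⟨x, y⟩, h, hxy⟩
        simp only [Prod.swap_prod_mk, Prod.mk.injEq] at hxy
        obtain ⟨rfl, rfl⟩ := hxy
        exact h
      · intro h; exact ⟨⟨b, a⟩, h, rfl⟩
    have hcardswap : (Finset.univ.filter (fun q : Fin N × Fin N => q.1 < q.2)).card
        = (Finset.univ.filter (fun q : Fin N × Fin N => q.2 < q.1)).card := by
      rw [← himg, Finset.card_image_of_injective _ Prod.swap_injective]
    have hdiag : (Finset.univ.filter (fun q : Fin N × Fin N => ¬ q.1 < q.2 ∧ ¬ q.2 < q.1)).card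
        = N := by
      have hd : (Finset.univ.filter (fun q : Fin N × Fin N => ¬ q.1 < q.2 ∧ ¬ q.2 < q.1))
          = (Finset.univ : Finset (Fin N)).diag := by
        ext ⟨a, b⟩
        simp only [Finset.mem_filter, Finset.mem_univ, true_and, Finset.mem_diag]
        omega
      rw [hd, Finset.diag_card, Finset.card_univ, Fintype.card_fin]
    have h1 := Finset.card_filter_add_card_filter_not
      (s := (Finset.univ : Finset (Fin N × Fin N))) (p := fun q => q.1 < q.2)
    have h2 := Finset.card_filter_add_card_filter_not
      (s := Finset.univ.filter (fun q : Fin N × Fin N => ¬ q.1 < q.2))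
      (p := fun q : Fin N × Fin N => q.2 < q.1)
    have e1 : (Finset.univ.filter (fun q : Fin N × Fin N => ¬ q.1 < q.2)).filter
        (fun q : Fin N × Fin N => q.2 < q.1)
        = Finset.univ.filter (fun q : Fin N × Fin N => q.2 < q.1) := by
      rw [Finset.filter_filter]
      apply Finset.filter_congr
      intro q _
      constructor
      · rintro ⟨_, h⟩; exact h
      · intro h; exact ⟨fun h' => absurd h (not_lt_of_gt h'), h⟩
    have e2 : (Finset.univ.filter (fun q : Fin N × Fin N => ¬ q.1 < q.2)).filter
        (fun q : Fin N × Fin N => ¬ q.2 < q.1)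
        = Finset.univ.filter (fun q : Fin N × Fin N => ¬ q.1 < q.2 ∧ ¬ q.2 < q.1) := by
      rw [Finset.filter_filter]
    have e3 : (Finset.univ : Finset (Fin N × Fin N)).card = N * N := by
      rw [Finset.card_univ]; simp [Fintype.card_prod]
    rw [e1, e2] at h2
    rw [e3] at h1
    omega
  set P := Finset.univ.filter (fun q : Fin N × Fin N => q.1 < q.2) with hP
  set T := ∑ q ∈ P, ((∑ m, pe m q.1 * pd q.1 q m) + (∑ m, pe m q.2 * pd q.2 q m)) with hT
  set G := ∑ m : M, Finset.univ.sup' Finset.univ_nonempty fun x => pe m x with hG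
  have hNN : N ≤ N * N := by nlinarith
  have hcardR : (2:ℝ) * (P.card : ℝ) = (N:ℝ) * (N:ℝ) - N := by
    have h : ((2 * P.card : ℕ) : ℝ) = ((N * N - N : ℕ) : ℝ) := by rw [hcard2]
    rw [Nat.cast_mul, Nat.cast_sub hNN, Nat.cast_mul, Nat.cast_ofNat] at h
    exact h
  -- Step 1: T ≤ ∑_{q∈P} ∑_m (pe m q.1 + pe m q.2 - min (pe m q.1) (pe m q.2))
  have step1 : T ≤ ∑ q ∈ P, ∑ m, (pe m q.1 + pe m q.2 - min (pe m q.1) (pe m q.2)) := by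
    apply Finset.sum_le_sum
    intro q hq
    have hlt : q.1 < q.2 := (Finset.mem_filter.mp hq).2
    rw [← Finset.sum_add_distrib]
    apply Finset.sum_le_sum
    intro m _
    have hst : pd q.1 q m + pd q.2 q m ≤ 1 := by
      have hsub : ∑ z ∈ ({q.1, q.2} : Finset (Fin N)), pd z q m ≤ ∑ z, pd z q m :=
        Finset.sum_le_sum_of_subset_of_nonneg (Finset.subset_univ _)
          (fun z _ _ => hpd0 z q m)
      rw [Finset.sum_pair (ne_of_lt hlt), hpd1 q m] at hsub
      exact hsub
    have hmax : max (pe m q.1) (pe m q.2) + min (pe m q.1) (pe m q.2)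
        = pe m q.1 + pe m q.2 := max_add_min _ _
    have h1 : pe m q.1 * pd q.1 q m + pe m q.2 * pd q.2 q m
        ≤ max (pe m q.1) (pe m q.2) * (pd q.1 q m + pd q.2 q m) := by
      rw [mul_add]
      exact add_le_add
        (mul_le_mul_of_nonneg_right (le_max_left _ _) (hpd0 _ _ _))
        (mul_le_mul_of_nonneg_right (le_max_right _ _) (hpd0 _ _ _))
    have h2 : max (pe m q.1) (pe m q.2) * (pd q.1 q m + pd q.2 q m)
        ≤ max (pe m q.1) (pe m q.2) := by
      nlinarith [le_max_left (pe m q.1) (pe m q.2), hpe0 m q.1, hst,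
        add_nonneg (hpd0 q.1 q m) (hpd0 q.2 q m)]
    linarith
  -- Step 2: per m, ∑_x pe m x - sup ≤ ∑_{q∈P} min
  have step2 : ∀ m : M, (∑ x, pe m x) - (Finset.univ.sup' Finset.univ_nonempty fun x => pe m x)
      ≤ ∑ q ∈ P, min (pe m q.1) (pe m q.2) := by
    intro m
    obtain ⟨xs, -, hxs⟩ := Finset.exists_mem_eq_sup' (Finset.univ_nonempty)
      (fun x => pe m x)
    rw [hxs]
    have hle : ∀ x : Fin N, pe m x ≤ pe m xs := by
      intro x
      have h := Finset.le_sup' (fun x => pe m x) (Finset.mem_univ x)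
      exact le_trans h (le_of_eq hxs)
    set e : Fin N → Fin N × Fin N := fun x => if x < xs then (x, xs) else (xs, x) with he
    have hval : ∀ x ∈ Finset.univ.erase xs, pe m x = min (pe m (e x).1) (pe m (e x).2) := by
      intro x hx
      by_cases h : x < xs
      · simp [he, h, min_eq_left (hle x)]
      · simp [he, h, min_eq_right (hle x)]
    have hinj : ∀ a ∈ Finset.univ.erase xs, ∀ b ∈ Finset.univ.erase xs, e a = e b → a = b := by
      intro a ha b hb hab
      by_cases h1 : a < xs <;> by_cases h2 : b < xs <;>
        simp only [he, h1, h2, if_true, if_false, Prod.mk.injEq, if_pos, if_neg,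
          not_false_eq_true] at hab <;> omega
    have hsub : (Finset.univ.erase xs).image e ⊆ P := by
      intro q hq
      obtain ⟨x, hx, rfl⟩ := Finset.mem_image.mp hq
      have hne : x ≠ xs := Finset.ne_of_mem_erase hx
      by_cases h : x < xs
      · simp [hP, he, h]
      · have hgt : xs < x := lt_of_le_of_ne (not_lt.mp h) (Ne.symm hne)
        simp [hP, he, h, hgt]
    have hkey : ∑ x ∈ Finset.univ.erase xs, pe m x ≤ ∑ q ∈ P, min (pe m q.1) (pe m q.2) :=
      calc ∑ x ∈ Finset.univ.erase xs, pe m x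
          = ∑ x ∈ Finset.univ.erase xs, min (pe m (e x).1) (pe m (e x).2) :=
            Finset.sum_congr rfl hval
        _ = ∑ q ∈ (Finset.univ.erase xs).image e,
              (fun q : Fin N × Fin N => min (pe m q.1) (pe m q.2)) q :=
            (Finset.sum_image (f := fun q : Fin N × Fin N => min (pe m q.1) (pe m q.2)) hinj).symm
        _ ≤ ∑ q ∈ P, min (pe m q.1) (pe m q.2) :=
            Finset.sum_le_sum_of_subset_of_nonneg hsub
              (fun q _ _ => le_min (hpe0 m q.1) (hpe0 m q.2))
    rw [Finset.sum_erase_eq_sub (Finset.mem_univ xs)] at hkey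
    exact hkey
  -- combine step 2 over m: N - G ≤ ∑_m ∑_{q∈P} min
  have step2' : (N:ℝ) - G ≤ ∑ m : M, ∑ q ∈ P, min (pe m q.1) (pe m q.2) := by
    have h := Finset.sum_le_sum (fun m (_ : m ∈ (Finset.univ : Finset M)) => step2 m)
    rw [Finset.sum_sub_distrib] at h
    have hx : ∑ m : M, ∑ x, pe m x = N := by
      rw [Finset.sum_comm]
      simp [hpe1]
    rw [hx] at h
    exact h
  -- Step 3: T ≤ G + N*(N-2)
  have key : T ≤ G + (N:ℝ) * ((N:ℝ) - 2) := by
    have hrhs : ∑ q ∈ P, ∑ m, (pe m q.1 + pe m q.2 - min (pe m q.1) (pe m q.2))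
        = 2 * (P.card : ℝ) - ∑ m : M, ∑ q ∈ P, min (pe m q.1) (pe m q.2) :=
      calc ∑ q ∈ P, ∑ m, (pe m q.1 + pe m q.2 - min (pe m q.1) (pe m q.2))
          = ∑ q ∈ P, ((2:ℝ) - ∑ m, min (pe m q.1) (pe m q.2)) := by
            apply Finset.sum_congr rfl
            intro q _
            rw [Finset.sum_sub_distrib, Finset.sum_add_distrib, hpe1, hpe1]
            norm_num
        _ = ∑ q ∈ P, (2:ℝ) - ∑ q ∈ P, ∑ m, min (pe m q.1) (pe m q.2) :=
            Finset.sum_sub_distrib _ _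
        _ = 2 * (P.card : ℝ) - ∑ m : M, ∑ q ∈ P, min (pe m q.1) (pe m q.2) := by
            rw [Finset.sum_const, nsmul_eq_mul, Finset.sum_comm]
            ring
    have h := le_trans step1 (le_of_eq hrhs)
    calc T ≤ 2 * (P.card : ℝ) - ∑ m : M, ∑ q ∈ P, min (pe m q.1) (pe m q.2) := h
      _ ≤ ((N:ℝ) * N - N) - ((N:ℝ) - G) := by rw [← hcardR]; linarith [step2']
      _ = G + (N:ℝ) * ((N:ℝ) - 2) := by ring
  -- final arithmetic
  have hNe : (N:ℝ) ≠ 0 := ne_of_gt hNpos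
  have hN1e : (N:ℝ) - 1 ≠ 0 := by intro h; nlinarith
  have e1 : ((N:ℝ) - 1) * ((1 / ((N:ℝ) * ((N:ℝ) - 1))) * T - 1) + 1
      = (1 / (N:ℝ)) * T - (N:ℝ) + 2 := by
    field_simp
    ring
  rw [e1]
  have h5 : (1 / (N:ℝ)) * T ≤ (1 / (N:ℝ)) * (G + (N:ℝ) * ((N:ℝ) - 2)) :=
    mul_le_mul_of_nonneg_left key (by positivity)
  have h6 : (1 / (N:ℝ)) * (G + (N:ℝ) * ((N:ℝ) - 2)) = (1 / (N:ℝ)) * G + ((N:ℝ) - 2) := by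
    field_simp
  linarith [h5, h6]
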